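/- Under the two-group heteroscedastic mixture model, suppose the distribution of T_1 is atomless and P(T_1 < t) > 0 for every t > t_0, where t_0 is the essential infimum of T_1. Then t ↦ α(t) is continuous on (t_0, 1], and for every α with t_0 < α < α(1) there exists t* ∈ (t_0, 1] such that α(t*) = α; that is, the oracle threshold attains the mFDR level exactly. -/

import Mathlib

open MeasureTheory ProbabilityTheory Set Filter

noncomputable section

/-- Density of the `N(0, s²)` distribution, i.e. the null density `f_{0,s}(x) = φ(x/s)/s`. -/
def gaussDens (s x : ℝ) : ℝ :=
  (s * Real.sqrt (2 * Real.pi))⁻¹ * Real.exp (-(x / s) ^ 2 / 2)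

/-- The alternative density `f_{1,s}(x) = ∫ φ((x−u)/s)/s dg_μ(u)`. -/
def altDens (gmu : Measure ℝ) (s x : ℝ) : ℝ :=
  ∫ u, gaussDens s (x - u) ∂gmu

/-- The mixture density `f_s(x) = (1−π) f_{0,s}(x) + π f_{1,s}(x)`. -/
def mixDens (p : ℝ) (gmu : Measure ℝ) (s x : ℝ) : ℝ :=
  (1 - p) * gaussDens s x + p * altDens gmu s x

/-- The oracle statistic `T(x, σ) = (1−π) f_{0,σ}(x) / f_σ(x) = P(θ = 0 | x, σ)`. -/
def Tstat (p : ℝ) (gmu : Measure ℝ) (s x : ℝ) : ℝ :=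
  (1 - p) * gaussDens s x / mixDens p gmu s x

/-- Marginal false discovery rate `mFDR(δ) = E[Σᵢ (1−θᵢ)δᵢ] / E[Σᵢ δᵢ]`. -/
def mFDR {Ω : Type} [MeasurableSpace Ω] (P : Measure Ω) {m : ℕ}
    (θ δ : Fin m → Ω → ℕ) : ℝ :=
  (∫ ω, ∑ i, (1 - (θ i ω : ℝ)) * (δ i ω : ℝ) ∂P) / ∫ ω, ∑ i, ((δ i ω : ℝ)) ∂P

/-- Expected number of true positives `ETP(δ) = E[Σᵢ θᵢδᵢ]`. -/
def ETP {Ω : Type} [MeasurableSpace Ω] (P : Measure Ω) {m : ℕ}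
    (θ δ : Fin m → Ω → ℕ) : ℝ :=
  ∫ ω, ∑ i, (θ i ω : ℝ) * (δ i ω : ℝ) ∂P

end

section AuxLemmas

open MeasureTheory ProbabilityTheory Set Filter

lemma gaussDens_zero (x : ℝ) : gaussDens 0 x = 0 := by
  simp [gaussDens]

lemma gaussDens_pos {s : ℝ} (hs : 0 < s) (x : ℝ) : 0 < gaussDens s x :=
  mul_pos (inv_pos.mpr (mul_pos hs (Real.sqrt_pos.mpr (by positivity)))) (Real.exp_pos _)

lemma gaussDens_neg {s : ℝ} (hs : s < 0) (x : ℝ) : gaussDens s x < 0 :=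
  mul_neg_of_neg_of_pos
    (inv_lt_zero.mpr (mul_neg_of_neg_of_pos hs (Real.sqrt_pos.mpr (by positivity))))
    (Real.exp_pos _)

lemma measurable_gaussDens2 : Measurable fun q : ℝ × ℝ => gaussDens q.1 q.2 := by
  unfold gaussDens
  exact ((measurable_fst.mul_const _).inv).mul
    ((((measurable_snd.div measurable_fst).pow_const 2).neg.div_const 2).exp)

lemma measurable_altDens2 (gmu : Measure ℝ) [SFinite gmu] :
    Measurable fun q : ℝ × ℝ => altDens gmu q.1 q.2 := by
  have h : StronglyMeasurable fun z : (ℝ × ℝ) × ℝ => gaussDens z.1.1 (z.1.2 - z.2) :=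
    (measurable_gaussDens2.comp ((measurable_fst.comp measurable_fst).prodMk
      ((measurable_snd.comp measurable_fst).sub measurable_snd))).stronglyMeasurable
  exact h.integral_prod_right'.measurable

lemma measurable_Tstat2 (p : ℝ) (gmu : Measure ℝ) [SFinite gmu] :
    Measurable fun q : ℝ × ℝ => Tstat p gmu q.1 q.2 := by
  unfold Tstat mixDens
  exact (measurable_gaussDens2.const_mul _).div
    (((measurable_gaussDens2.const_mul _)).add ((measurable_altDens2 gmu).const_mul _))

lemma Tstat_mem_Icc {p : ℝ} (hp0 : 0 < p) (hp1 : p < 1) (gmu : Measure ℝ) (s x : ℝ) :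
    Tstat p gmu s x ∈ Icc (0:ℝ) 1 := by
  have h1p : 0 < 1 - p := by linarith
  rcases lt_trichotomy s 0 with hs | hs | hs
  · have hg : gaussDens s x < 0 := gaussDens_neg hs x
    have halt : altDens gmu s x ≤ 0 :=
      integral_nonpos fun u => (gaussDens_neg hs (x - u)).le
    have hpa : p * altDens gmu s x ≤ 0 := mul_nonpos_of_nonneg_of_nonpos hp0.le halt
    have hnum : (1 - p) * gaussDens s x < 0 := mul_neg_of_pos_of_neg h1p hg
    have hmix : mixDens p gmu s x ≤ (1 - p) * gaussDens s x := by
      unfold mixDens; linarith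
    have hmixneg : mixDens p gmu s x < 0 := lt_of_le_of_lt hmix hnum
    constructor
    · rw [Tstat, ← neg_div_neg_eq]
      exact div_nonneg (by linarith) (by linarith)
    · rw [Tstat, ← neg_div_neg_eq, div_le_one (by linarith)]
      linarith
  · subst hs
    simp [Tstat, gaussDens_zero]
  · have hg : 0 < gaussDens s x := gaussDens_pos hs x
    have halt : 0 ≤ altDens gmu s x :=
      integral_nonneg fun u => (gaussDens_pos hs (x - u)).le
    have hpa : 0 ≤ p * altDens gmu s x := mul_nonneg hp0.le halt
    have hnum : 0 < (1 - p) * gaussDens s x := mul_pos h1p hg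
    have hmix : (1 - p) * gaussDens s x ≤ mixDens p gmu s x := by
      unfold mixDens; linarith
    refine ⟨div_nonneg hnum.le (by linarith), ?_⟩
    rw [Tstat, div_le_one (by linarith)]
    exact hmix

lemma cdf_measure_diff (ρ : Measure ℝ) [IsFiniteMeasure ρ] {c d : ℝ} (hcd : c ≤ d) :
    (ρ (Iio d)).toReal - (ρ (Iio c)).toReal = (ρ (Ico c d)).toReal := by
  have hu : Iio c ∪ Ico c d = Iio d := Iio_union_Ico_eq_Iio hcd
  have hdisj : Disjoint (Iio c) (Ico c d) :=
    Set.disjoint_left.mpr fun y hy hy2 => absurd hy2.1 (not_le.mpr hy)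
  rw [← hu, measure_union hdisj measurableSet_Ico,
      ENNReal.toReal_add (measure_ne_top _ _) (measure_ne_top _ _)]
  ring

lemma continuous_cdf_of_noatoms (ρ : Measure ℝ) [IsFiniteMeasure ρ]
    (h0 : ∀ c : ℝ, ρ {c} = 0) : Continuous fun t => (ρ (Iio t)).toReal := by
  have hmono : Monotone fun t => (ρ (Iio t)).toReal := fun u v huv =>
    ENNReal.toReal_mono (measure_ne_top _ _) (measure_mono (Iio_subset_Iio huv))
  rw [Metric.continuous_iff]
  intro b ε hε
  set s : ℕ → Set ℝ := fun n => Icc (b - 1/((n:ℝ)+1)) (b + 1/((n:ℝ)+1)) with hs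
  have hInter : ⋂ n, s n = {b} := by
    ext y
    simp only [hs, mem_iInter, mem_Icc, mem_singleton_iff]
    constructor
    · intro h
      by_contra hy
      obtain ⟨n, hn⟩ := exists_nat_one_div_lt (abs_pos.mpr (sub_ne_zero.mpr hy))
      have h2 : |y - b| ≤ 1/((n:ℝ)+1) :=
        abs_le.mpr ⟨by linarith [(h n).1], by linarith [(h n).2]⟩
      linarith
    · rintro rfl n
      have hpos : (0:ℝ) < 1/((n:ℝ)+1) := by positivity
      exact ⟨by linarith, by linarith⟩
  have hanti : Antitone s := by
    intro i j hij
    have hij' : (i:ℝ) ≤ (j:ℝ) := Nat.cast_le.mpr hij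
    have h1 : (1:ℝ)/((j:ℝ)+1) ≤ 1/((i:ℝ)+1) :=
      one_div_le_one_div_of_le (by positivity) (by linarith)
    exact Icc_subset_Icc (by linarith) (by linarith)
  have hkey := tendsto_measure_iInter_atTop
    (μ := ρ) (s := s) (fun n => measurableSet_Icc.nullMeasurableSet) hanti
    ⟨0, measure_ne_top ρ _⟩
  rw [hInter, h0 b] at hkey
  obtain ⟨n, hn⟩ := (hkey.eventually (gt_mem_nhds (ENNReal.ofReal_pos.mpr hε))).exists
  refine ⟨1/((n:ℝ)+1), by positivity, fun a hab => ?_⟩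
  rw [Real.dist_eq] at hab
  have key : ∀ c d : ℝ, c ≤ d → |c - b| < 1/((n:ℝ)+1) → |d - b| < 1/((n:ℝ)+1) →
      (ρ (Iio d)).toReal - (ρ (Iio c)).toReal < ε := by
    intro c d hcd hc hd
    rw [cdf_measure_diff ρ hcd]
    have hsubset : Ico c d ⊆ s n := by
      intro y hy
      rw [abs_lt] at hc hd
      exact ⟨by linarith [hy.1, hc.1], by linarith [hy.2, hd.2]⟩
    exact ENNReal.toReal_lt_of_lt_ofReal (lt_of_le_of_lt (measure_mono hsubset) hn)
  have hzero : |b - b| < 1/((n:ℝ)+1) := by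
    rw [sub_self, abs_zero]; positivity
  rcases le_total a b with h | h
  · rw [Real.dist_eq, abs_sub_comm, abs_of_nonneg (sub_nonneg.mpr (hmono h))]
    exact key a b h hab hzero
  · rw [Real.dist_eq, abs_of_nonneg (sub_nonneg.mpr (hmono h))]
    exact key b a h hzero hab

end AuxLemmas


/-- if the distribution of `T₁` is atomless and `P(T₁ < t) > 0` for all
`t > t₀` (where `t₀` is the essential infimum of `T₁`), then `t ↦ α(t)` is continuous on
`(t₀, 1]` and every level `α ∈ (t₀, α(1))` is attained exactly: `α(t*) = α` for some
`t* ∈ (t₀, 1]`. -/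
theorem statement4
    {Ω : Type} [MeasurableSpace Ω] (P : Measure Ω) [IsProbabilityMeasure P]
    (m : ℕ) (p : ℝ) (hp : p ∈ Ioo (0 : ℝ) 1)
    (gsig gmu : Measure ℝ) [IsProbabilityMeasure gsig] [IsProbabilityMeasure gmu]
    (hgsig : gsig (Iic 0) = 0)
    (θ : Fin m → Ω → ℕ) (sig X : Fin m → Ω → ℝ)
    (hθmeas : ∀ i, Measurable (θ i)) (hsigmeas : ∀ i, Measurable (sig i))
    (hXmeas : ∀ i, Measurable (X i))
    (hθval : ∀ i ω, θ i ω ≤ 1)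
    (hindep : iIndepFun
      (fun i ω => (θ i ω, sig i ω, X i ω)) P)
    (hlaw0 : ∀ i, ∀ B A : Set ℝ, MeasurableSet B → MeasurableSet A →
      (P {ω | θ i ω = 0 ∧ sig i ω ∈ B ∧ X i ω ∈ A}).toReal
        = (1 - p) * ∫ s in B, (∫ x in A, gaussDens s x) ∂gsig)
    (hlaw1 : ∀ i, ∀ B A : Set ℝ, MeasurableSet B → MeasurableSet A →
      (P {ω | θ i ω = 1 ∧ sig i ω ∈ B ∧ X i ω ∈ A}).toReal
        = p * ∫ s in B, (∫ x in A, altDens gmu s x) ∂gsig)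
    (hm : 0 < m)
    (alphaFun : ℝ → ℝ)
    (halphaFun : ∀ t : ℝ, alphaFun t =
      (∫ ω, ∑ i, Tstat p gmu (sig i ω) (X i ω) *
          (if Tstat p gmu (sig i ω) (X i ω) < t then (1 : ℝ) else 0) ∂P) /
        (∫ ω, ∑ i, (if Tstat p gmu (sig i ω) (X i ω) < t then (1 : ℝ) else 0) ∂P))
    (t₀ : ℝ)
    (ht₀ : t₀ = essInf (fun ω => Tstat p gmu (sig ⟨0, hm⟩ ω) (X ⟨0, hm⟩ ω)) P)
    (hatomless : ∀ c : ℝ, P {ω | Tstat p gmu (sig ⟨0, hm⟩ ω) (X ⟨0, hm⟩ ω) = c} = 0)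
    (hpos : ∀ t : ℝ, t₀ < t →
      0 < P {ω | Tstat p gmu (sig ⟨0, hm⟩ ω) (X ⟨0, hm⟩ ω) < t}) :
    ContinuousOn alphaFun (Ioc t₀ 1) ∧
    ∀ a : ℝ, a ∈ Ioo t₀ (alphaFun 1) → ∃ tstar ∈ Ioc t₀ 1, alphaFun tstar = a := by
  obtain ⟨hp0, hp1⟩ := hp
  set i0 : Fin m := ⟨0, hm⟩ with hi0
  set φ : ℝ × ℝ → ℝ := fun q => Tstat p gmu q.1 q.2 with hφdef
  have hφmeas : Measurable φ := measurable_Tstat2 p gmu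
  have hφ01 : ∀ q, φ q ∈ Icc (0:ℝ) 1 := fun q => Tstat_mem_Icc hp0 hp1 gmu q.1 q.2
  set pair : Fin m → Ω → ℝ × ℝ := fun i ω => (sig i ω, X i ω) with hpairdef
  have hpairmeas : ∀ i, Measurable (pair i) := fun i => (hsigmeas i).prodMk (hXmeas i)
  set κ0 : Measure (ℝ × ℝ) := P.map (pair i0) with hκ0def
  haveI hκ0prob : IsProbabilityMeasure κ0 :=
    Measure.isProbabilityMeasure_map (hpairmeas i0).aemeasurable
  -- all pairs (sig i, X i) have the same law
  have hlawmain : ∀ i (B A : Set ℝ), MeasurableSet B → MeasurableSet A →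
      (P {ω | sig i ω ∈ B ∧ X i ω ∈ A}).toReal
        = (1 - p) * ∫ s in B, (∫ x in A, gaussDens s x) ∂gsig
          + p * ∫ s in B, (∫ x in A, altDens gmu s x) ∂gsig := by
    intro i B A hB hA
    have hsplit : {ω | sig i ω ∈ B ∧ X i ω ∈ A}
        = {ω | θ i ω = 0 ∧ sig i ω ∈ B ∧ X i ω ∈ A}
          ∪ {ω | θ i ω = 1 ∧ sig i ω ∈ B ∧ X i ω ∈ A} := by
      ext ω
      simp only [mem_setOf_eq, mem_union]
      constructor
      · intro h
        rcases Nat.le_one_iff_eq_zero_or_eq_one.mp (hθval i ω) with h0 | h1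
        · exact Or.inl ⟨h0, h⟩
        · exact Or.inr ⟨h1, h⟩
      · rintro (⟨_, h⟩ | ⟨_, h⟩) <;> exact h
    have hmeas1 : MeasurableSet {ω | θ i ω = 1 ∧ sig i ω ∈ B ∧ X i ω ∈ A} :=
      (hθmeas i (measurableSet_singleton 1)).inter
        ((hsigmeas i hB).inter (hXmeas i hA))
    have hdisj : Disjoint {ω | θ i ω = 0 ∧ sig i ω ∈ B ∧ X i ω ∈ A}
        {ω | θ i ω = 1 ∧ sig i ω ∈ B ∧ X i ω ∈ A} := by
      rw [Set.disjoint_left]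
      rintro ω ⟨h0, -⟩ ⟨h1, -⟩
      rw [h0] at h1
      exact absurd h1 (by norm_num)
    rw [hsplit, measure_union hdisj hmeas1,
        ENNReal.toReal_add (measure_ne_top _ _) (measure_ne_top _ _),
        hlaw0 i B A hB hA, hlaw1 i B A hB hA]
  have hκeq : ∀ i, P.map (pair i) = κ0 := by
    intro i
    refine ext_of_generate_finite _ generateFrom_prod.symm isPiSystem_prod ?_ ?_
    · rintro S ⟨B, hB, A, hA, rfl⟩
      have hB' : MeasurableSet B := hB
      have hA' : MeasurableSet A := hA
      have hBA : MeasurableSet (B ×ˢ A) := hB'.prod hA'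
      have h1 : ∀ j, P.map (pair j) (B ×ˢ A) = P {ω | sig j ω ∈ B ∧ X j ω ∈ A} := by
        intro j
        rw [Measure.map_apply (hpairmeas j) hBA]
        rfl
      rw [hκ0def, h1 i, h1 i0]
      exact (ENNReal.toReal_eq_toReal_iff' (measure_ne_top _ _) (measure_ne_top _ _)).mp
        (by rw [hlawmain i B A hB hA, hlawmain i0 B A hB hA])
    · haveI : IsProbabilityMeasure (P.map (pair i)) :=
        Measure.isProbabilityMeasure_map (hpairmeas i).aemeasurable
      simp
  have hmapset : ∀ i (U : Set (ℝ × ℝ)), MeasurableSet U → P (pair i ⁻¹' U) = κ0 U := by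
    intro i U hU
    rw [← hκeq i, Measure.map_apply (hpairmeas i) hU]
  -- the CDF-type functions
  set F : ℝ → ℝ := fun t => (κ0 (φ ⁻¹' Iio t)).toReal with hFdef
  set G : ℝ → ℝ := fun t => ∫ q in φ ⁻¹' Iio t, φ q ∂κ0 with hGdef
  have hAmeas : ∀ t : ℝ, MeasurableSet (φ ⁻¹' Iio t) := fun t => hφmeas measurableSet_Iio
  have hφint : Integrable φ κ0 := by
    refine (integrable_const (1:ℝ)).mono' hφmeas.aestronglyMeasurable ?_
    filter_upwards with q
    rw [Real.norm_eq_abs, abs_of_nonneg (hφ01 q).1]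
    exact (hφ01 q).2
  -- continuity of F
  have hρ0 : ∀ c : ℝ, (Measure.map φ κ0) {c} = 0 := by
    intro c
    rw [Measure.map_apply hφmeas (measurableSet_singleton c),
        ← hmapset i0 _ (hφmeas (measurableSet_singleton c))]
    exact hatomless c
  haveI : IsFiniteMeasure (Measure.map φ κ0) := by
    haveI : IsProbabilityMeasure (Measure.map φ κ0) :=
      Measure.isProbabilityMeasure_map hφmeas.aemeasurable
    infer_instance
  have hFcont : Continuous F := by
    have h := continuous_cdf_of_noatoms (Measure.map φ κ0) hρ0
    have heq : F = fun t => ((Measure.map φ κ0) (Iio t)).toReal := by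
      funext t
      rw [hFdef, Measure.map_apply hφmeas measurableSet_Iio]
    rw [heq]
    exact h
  have hFmono : Monotone F := fun u v huv =>
    ENNReal.toReal_mono (measure_ne_top _ _) (measure_mono (preimage_mono (Iio_subset_Iio huv)))
  -- difference formulas
  have hFdiff : ∀ u v : ℝ, u ≤ v →
      F v = F u + (κ0 (φ ⁻¹' Iio v \ φ ⁻¹' Iio u)).toReal := by
    intro u v huv
    have hunion : φ ⁻¹' Iio u ∪ (φ ⁻¹' Iio v \ φ ⁻¹' Iio u) = φ ⁻¹' Iio v :=
      union_diff_cancel (preimage_mono (Iio_subset_Iio huv))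
    have hmu : κ0 (φ ⁻¹' Iio v) = κ0 (φ ⁻¹' Iio u) + κ0 (φ ⁻¹' Iio v \ φ ⁻¹' Iio u) := by
      conv_lhs => rw [← hunion]
      exact measure_union disjoint_sdiff_right ((hAmeas v).diff (hAmeas u))
    rw [hFdef]
    simp only []
    rw [hmu, ENNReal.toReal_add (measure_ne_top _ _) (measure_ne_top _ _)]
  have hGdiff : ∀ u v : ℝ, u ≤ v →
      G v = G u + ∫ q in (φ ⁻¹' Iio v \ φ ⁻¹' Iio u), φ q ∂κ0 := by
    intro u v huv
    have hunion : φ ⁻¹' Iio u ∪ (φ ⁻¹' Iio v \ φ ⁻¹' Iio u) = φ ⁻¹' Iio v :=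
      union_diff_cancel (preimage_mono (Iio_subset_Iio huv))
    have hmu : (∫ q in φ ⁻¹' Iio v, φ q ∂κ0)
        = (∫ q in φ ⁻¹' Iio u, φ q ∂κ0) + ∫ q in (φ ⁻¹' Iio v \ φ ⁻¹' Iio u), φ q ∂κ0 := by
      conv_lhs => rw [← hunion]
      exact setIntegral_union disjoint_sdiff_right ((hAmeas v).diff (hAmeas u))
        hφint.integrableOn hφint.integrableOn
    rw [hGdef]
    simp only []
    exact hmu
  have habs : ∀ u v : ℝ, |G v - G u| ≤ |F v - F u| := by
    have key : ∀ u v : ℝ, u ≤ v → |G v - G u| ≤ |F v - F u| := by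
      intro u v huv
      have hD := hGdiff u v huv
      have hFD := hFdiff u v huv
      have hmeasD : MeasurableSet (φ ⁻¹' Iio v \ φ ⁻¹' Iio u) :=
        (hAmeas v).diff (hAmeas u)
      have h1 : 0 ≤ ∫ q in (φ ⁻¹' Iio v \ φ ⁻¹' Iio u), φ q ∂κ0 :=
        setIntegral_nonneg hmeasD fun q _ => (hφ01 q).1
      have h2 : (∫ q in (φ ⁻¹' Iio v \ φ ⁻¹' Iio u), φ q ∂κ0)
          ≤ (κ0 (φ ⁻¹' Iio v \ φ ⁻¹' Iio u)).toReal := by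
        have := setIntegral_mono_on hφint.integrableOn
          (integrableOn_const (measure_ne_top _ _))
          hmeasD (fun q _ => (hφ01 q).2)
        rwa [setIntegral_const, smul_eq_mul, mul_one] at this
      rw [abs_of_nonneg (by linarith), abs_of_nonneg (by linarith)]
      linarith
    intro u v
    rcases le_total u v with h | h
    · exact key u v h
    · rw [abs_sub_comm, abs_sub_comm (F v)]
      exact key v u h
  have hGcont : Continuous G := by
    rw [continuous_iff_continuousAt]
    intro t
    rw [ContinuousAt, tendsto_iff_dist_tendsto_zero]
    refine squeeze_zero (g := fun u => dist (F u) (F t)) (fun _ => dist_nonneg) (fun u => ?_) ?_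
    · show dist (G u) (G t) ≤ dist (F u) (F t)
      rw [Real.dist_eq, Real.dist_eq]
      exact habs t u
    · exact tendsto_iff_dist_tendsto_zero.mp hFcont.continuousAt
  -- identification of alphaFun with G/F
  have hindint : ∀ (i : Fin m) (t : ℝ),
      Integrable (fun ω => Tstat p gmu (sig i ω) (X i ω)) P := by
    intro i t
    refine (integrable_const (1:ℝ)).mono'
      ((hφmeas.comp (hpairmeas i)).aestronglyMeasurable) ?_
    filter_upwards with ω
    rw [Real.norm_eq_abs, abs_of_nonneg (hφ01 (pair i ω)).1]
    exact (hφ01 (pair i ω)).2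
  have hEmeas : ∀ (i : Fin m) (t : ℝ), MeasurableSet (pair i ⁻¹' (φ ⁻¹' Iio t)) :=
    fun i t => (hpairmeas i) (hAmeas t)
  have hsum_ind : ∀ t : ℝ,
      (∫ ω, ∑ i, (if Tstat p gmu (sig i ω) (X i ω) < t then (1:ℝ) else 0) ∂P)
        = m * F t := by
    intro t
    have heq : ∀ i : Fin m, (fun ω => if Tstat p gmu (sig i ω) (X i ω) < t then (1:ℝ) else 0)
        = Set.indicator (pair i ⁻¹' (φ ⁻¹' Iio t)) (fun _ => (1:ℝ)) := by
      intro i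
      funext ω
      by_cases h : Tstat p gmu (sig i ω) (X i ω) < t
      · rw [if_pos h, Set.indicator_of_mem (show ω ∈ pair i ⁻¹' (φ ⁻¹' Iio t) from h)]
      · rw [if_neg h, Set.indicator_of_notMem (show ω ∉ pair i ⁻¹' (φ ⁻¹' Iio t) from h)]
    have hint : ∀ i : Fin m,
        Integrable (fun ω => if Tstat p gmu (sig i ω) (X i ω) < t then (1:ℝ) else 0) P := by
      intro i
      rw [heq i]
      exact (integrable_const (1:ℝ)).indicator (hEmeas i t)
    rw [integral_finset_sum _ fun i _ => hint i]
    have hval : ∀ i : Fin m,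
        (∫ ω, (if Tstat p gmu (sig i ω) (X i ω) < t then (1:ℝ) else 0) ∂P) = F t := by
      intro i
      rw [heq i, integral_indicator (hEmeas i t), setIntegral_const, smul_eq_mul, mul_one,
          measureReal_def, hmapset i _ (hAmeas t), hFdef]
    rw [Finset.sum_congr rfl fun i _ => hval i, Finset.sum_const, Finset.card_univ,
        Fintype.card_fin, nsmul_eq_mul]
  have hsum_T : ∀ t : ℝ,
      (∫ ω, ∑ i, Tstat p gmu (sig i ω) (X i ω) *
          (if Tstat p gmu (sig i ω) (X i ω) < t then (1:ℝ) else 0) ∂P)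
        = m * G t := by
    intro t
    have heq : ∀ i : Fin m, (fun ω => Tstat p gmu (sig i ω) (X i ω) *
          (if Tstat p gmu (sig i ω) (X i ω) < t then (1:ℝ) else 0))
        = Set.indicator (pair i ⁻¹' (φ ⁻¹' Iio t))
            (fun ω => Tstat p gmu (sig i ω) (X i ω)) := by
      intro i
      funext ω
      by_cases h : Tstat p gmu (sig i ω) (X i ω) < t
      · rw [if_pos h, mul_one,
          Set.indicator_of_mem (show ω ∈ pair i ⁻¹' (φ ⁻¹' Iio t) from h)]
      · rw [if_neg h, mul_zero,
          Set.indicator_of_notMem (show ω ∉ pair i ⁻¹' (φ ⁻¹' Iio t) from h)]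
    have hint : ∀ i : Fin m, Integrable (fun ω => Tstat p gmu (sig i ω) (X i ω) *
          (if Tstat p gmu (sig i ω) (X i ω) < t then (1:ℝ) else 0)) P := by
      intro i
      rw [heq i]
      exact (hindint i t).indicator (hEmeas i t)
    rw [integral_finset_sum _ fun i _ => hint i]
    have hval : ∀ i : Fin m,
        (∫ ω, Tstat p gmu (sig i ω) (X i ω) *
            (if Tstat p gmu (sig i ω) (X i ω) < t then (1:ℝ) else 0) ∂P) = G t := by
      intro i
      rw [heq i, integral_indicator (hEmeas i t)]
      have hmap := setIntegral_map (μ := P) (g := pair i) (f := φ) (hAmeas t)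
        hφmeas.aestronglyMeasurable (hpairmeas i).aemeasurable
      rw [hκeq i] at hmap
      rw [hGdef]
      exact hmap.symm
    rw [Finset.sum_congr rfl fun i _ => hval i, Finset.sum_const, Finset.card_univ,
        Fintype.card_fin, nsmul_eq_mul]
  have hm0 : (m:ℝ) ≠ 0 := Nat.cast_ne_zero.mpr hm.ne'
  have hαeq : ∀ t : ℝ, alphaFun t = G t / F t := by
    intro t
    rw [halphaFun t, hsum_T t, hsum_ind t, mul_div_mul_left _ _ hm0]
  -- positivity of F above t₀
  have hFpos : ∀ t : ℝ, t₀ < t → 0 < F t := by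
    intro t ht
    have h := hpos t ht
    have hset : {ω | Tstat p gmu (sig i0 ω) (X i0 ω) < t} = pair i0 ⁻¹' (φ ⁻¹' Iio t) := rfl
    rw [hset, hmapset i0 _ (hAmeas t)] at h
    exact ENNReal.toReal_pos h.ne' (measure_ne_top _ _)
  -- G t ≤ F t * t
  have hGle : ∀ t : ℝ, G t ≤ F t * t := by
    intro t
    have h := setIntegral_mono_on hφint.integrableOn
      (integrableOn_const (measure_ne_top _ _))
      (hAmeas t) (fun q hq => le_of_lt hq)
    rwa [setIntegral_const, smul_eq_mul] at h
  -- continuity of alphaFun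
  have hcont : ContinuousOn alphaFun (Ioc t₀ 1) := by
    have hfun : alphaFun = fun t => G t / F t := funext hαeq
    rw [hfun]
    intro t ht
    have : ContinuousAt (fun t => G t / F t) t :=
      hGcont.continuousAt.div hFcont.continuousAt (hFpos t ht.1).ne'
    exact this.continuousWithinAt
  refine ⟨hcont, ?_⟩
  rintro a ⟨ha1, ha2⟩
  have hα1le : alphaFun 1 ≤ 1 := by
    rw [hαeq]
    rcases eq_or_lt_of_le (show (0:ℝ) ≤ F 1 from ENNReal.toReal_nonneg) with h | h
    · rw [← h, div_zero]
      exact zero_le_one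
    · rw [div_le_one h]
      have := hGle 1
      linarith
  have ha1' : a < 1 := lt_of_lt_of_le ha2 hα1le
  have h1 : t₀ < (t₀ + a)/2 := by linarith
  have h2 : (t₀ + a)/2 < a := by linarith
  have h3 : (t₀ + a)/2 ≤ 1 := by linarith
  have hαt1 : alphaFun ((t₀ + a)/2) ≤ (t₀ + a)/2 := by
    rw [hαeq, div_le_iff₀ (hFpos _ h1)]
    have := hGle ((t₀ + a)/2)
    linarith
  have hsub : Icc ((t₀ + a)/2) 1 ⊆ Ioc t₀ 1 := fun x hx => ⟨lt_of_lt_of_le h1 hx.1, hx.2⟩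
  have hamem : a ∈ Icc (alphaFun ((t₀ + a)/2)) (alphaFun 1) := ⟨by linarith, ha2.le⟩
  obtain ⟨ts, hts, htseq⟩ := intermediate_value_Icc h3 (hcont.mono hsub) hamem
  exact ⟨ts, ⟨lt_of_lt_of_le h1 hts.1, hts.2⟩, htseq⟩
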